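/- Suppose at step k of the DFP method that s_k ≠ 0, τ_k < 1, and ‖B̂_k − I‖_F ≤ δ for some δ > 0. Then the DFP update satisfies ‖B̂_{k+1} − I‖_F ≤ ‖B̂_k − I‖_F − ‖(B̂_k − I)ŝ_k‖²/(2δ‖ŝ_k‖²) + W_k·τ_k, where W_k = ‖B̂_k‖·4/(1 − τ_k) + ‖B̂_k‖·4τ_k/(1 − τ_k)² + (3 + τ_k)/(1 − τ_k). -/

import Mathlib

noncomputable section

open Matrix Finset

abbrev E (d : ℕ) := EuclideanSpace ℝ (Fin d)
abbrev Mat (d : ℕ) := Matrix (Fin d) (Fin d) ℝ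

/-- Spectral (operator 2-) norm of a real matrix. -/
def spec {d : ℕ} (A : Mat d) : ℝ := ‖Matrix.toEuclideanCLM (𝕜 := ℝ) A‖

/-- Frobenius norm of a real matrix. -/
def frob {d : ℕ} (A : Mat d) : ℝ := Real.sqrt (∑ i, ∑ j, (A i j) ^ 2)

/-- A matrix acting on a Euclidean vector. -/
def mApp {d : ℕ} (A : Mat d) (v : E d) : E d := Matrix.toEuclideanCLM (𝕜 := ℝ) A v

/-- Outer product `u vᵀ`. -/
def outer {d : ℕ} (u v : E d) : Mat d := Matrix.of fun i j => u i * v j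

/-- Euclidean dot product. -/
def dot {d : ℕ} (u v : E d) : ℝ := ∑ i, u i * v i

/-- `σ(x) = (M/μ^{3/2})·‖H_*^{1/2}(x − x_*)‖`. -/
def sig {d : ℕ} (M μ : ℝ) (sqH : Mat d) (xs x : E d) : ℝ :=
  M / μ ^ ((3:ℝ)/2) * ‖mApp sqH (x - xs)‖

/-- `τ = max{σ(x), σ(x')}`. -/
def tauP {d : ℕ} (M μ : ℝ) (sqH : Mat d) (xs x x' : E d) : ℝ :=
  max (sig M μ sqH xs x) (sig M μ sqH xs x')

/-- The DFP update of the Hessian approximation. -/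
def dfpUpdate {d : ℕ} (B : Mat d) (s y : E d) : Mat d :=
  (1 - (dot y s)⁻¹ • outer y s) * B * (1 - (dot s y)⁻¹ • outer s y)
    + (dot y s)⁻¹ • outer y y

namespace DFPaux
variable {d : ℕ}

lemma mApp_apply (A : Mat d) (v : E d) (i : Fin d) : mApp A v i = ∑ j, A i j * v j := by
  have h := Matrix.ofLp_toEuclideanCLM (𝕜 := ℝ) A v
  have h2 : mApp A v i = (Matrix.toEuclideanCLM (𝕜 := ℝ) A v).ofLp i := rfl
  rw [h2, h]
  simp [Matrix.mulVec, dotProduct]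

lemma dot_comm (u v : E d) : dot u v = dot v u := by simp [dot, mul_comm]

lemma norm_sq_eq (v : E d) : ‖v‖ ^ 2 = ∑ i, v i ^ 2 := by
  rw [EuclideanSpace.norm_eq, Real.sq_sqrt (by positivity)]
  simp [sq]

lemma dot_self (v : E d) : dot v v = ‖v‖ ^ 2 := by rw [norm_sq_eq]; simp [dot, sq]

lemma dot_eq_inner (u v : E d) : dot u v = inner ℝ u v := by
  simp [dot, PiLp.inner_apply, RCLike.inner_apply, mul_comm]

lemma abs_dot_le (u v : E d) : |dot u v| ≤ ‖u‖ * ‖v‖ := by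
  rw [dot_eq_inner]; exact abs_real_inner_le_norm u v

lemma dot_add_left (u v w : E d) : dot (u + v) w = dot u w + dot v w := by
  simp [dot, add_mul, Finset.sum_add_distrib]

lemma dot_sub_left (u v w : E d) : dot (u - v) w = dot u w - dot v w := by
  simp [dot, sub_mul, Finset.sum_sub_distrib]

-- mApp algebra
lemma mApp_mul (A B : Mat d) (v : E d) : mApp (A * B) v = mApp A (mApp B v) := by
  simp [mApp, _root_.map_mul]

lemma mApp_one (v : E d) : mApp 1 v = v := by simp [mApp]

lemma mApp_sub (A B : Mat d) (v : E d) : mApp (A - B) v = mApp A v - mApp B v := by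
  simp [mApp, map_sub]

lemma dot_mApp_left (A : Mat d) (u v : E d) : dot (mApp A u) v = dot u (mApp Aᵀ v) := by
  simp only [dot, mApp_apply, Finset.sum_mul, Finset.mul_sum]
  rw [Finset.sum_comm]
  apply Finset.sum_congr rfl; intro i _
  apply Finset.sum_congr rfl; intro j _
  simp [Matrix.transpose_apply]; ring

-- spec lemmas
lemma spec_nonneg (A : Mat d) : 0 ≤ spec A := norm_nonneg _

lemma norm_mApp_le_spec (A : Mat d) (v : E d) : ‖mApp A v‖ ≤ spec A * ‖v‖ :=
  (Matrix.toEuclideanCLM (𝕜 := ℝ) A).le_opNorm v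

lemma spec_mul_le (A B : Mat d) : spec (A * B) ≤ spec A * spec B := by
  simp only [spec, _root_.map_mul]; exact norm_mul_le _ _

lemma spec_le_bound (A : Mat d) {C : ℝ} (hC : 0 ≤ C) (h : ∀ v, ‖mApp A v‖ ≤ C * ‖v‖) :
    spec A ≤ C := ContinuousLinearMap.opNorm_le_bound _ hC h

-- frob lemmas
lemma frob_nonneg (A : Mat d) : 0 ≤ frob A := Real.sqrt_nonneg _

lemma frob_sq (A : Mat d) : frob A ^ 2 = ∑ i, ∑ j, (A i j) ^ 2 := by
  rw [frob, Real.sq_sqrt (by positivity)]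

/-- embedding into Euclidean space of pairs -/
def em (A : Mat d) : EuclideanSpace ℝ (Fin d × Fin d) :=
  (WithLp.equiv 2 _).symm (fun p : Fin d × Fin d => A p.1 p.2)

lemma em_apply (A : Mat d) (p : Fin d × Fin d) : em A p = A p.1 p.2 := rfl

lemma frob_eq_em (A : Mat d) : frob A = ‖em A‖ := by
  rw [EuclideanSpace.norm_eq, frob]
  congr 1
  rw [Fintype.sum_prod_type]
  apply Finset.sum_congr rfl; intro i _
  apply Finset.sum_congr rfl; intro j _
  rw [em_apply]
  simp [sq_abs]

lemma em_add (A B : Mat d) : em (A + B) = em A + em B := rfl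
lemma em_smul (t : ℝ) (A : Mat d) : em (t • A) = t • em A := rfl

lemma frob_add_le (A B : Mat d) : frob (A + B) ≤ frob A + frob B := by
  rw [frob_eq_em, frob_eq_em, frob_eq_em, em_add]; exact norm_add_le _ _

lemma frob_smul (t : ℝ) (A : Mat d) : frob (t • A) = |t| * frob A := by
  rw [frob_eq_em, frob_eq_em, em_smul, norm_smul, Real.norm_eq_abs]

lemma frob_outer (u v : E d) : frob (outer u v) = ‖u‖ * ‖v‖ := by
  rw [frob]
  have : ∑ i, ∑ j, (outer u v i j) ^ 2 = (∑ i, u i ^ 2) * (∑ j, v j ^ 2) := by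
    rw [Finset.sum_mul_sum]
    simp [outer, mul_pow]
  rw [this, Real.sqrt_mul (by positivity), ← norm_sq_eq, ← norm_sq_eq,
    Real.sqrt_sq (norm_nonneg _), Real.sqrt_sq (norm_nonneg _)]

lemma frob_transpose (A : Mat d) : frob Aᵀ = frob A := by
  rw [frob, frob, Finset.sum_comm]
  simp [Matrix.transpose_apply]

lemma norm_mApp_le_frob (A : Mat d) (v : E d) : ‖mApp A v‖ ≤ frob A * ‖v‖ := by
  have h1 : ‖mApp A v‖ ^ 2 ≤ (frob A * ‖v‖) ^ 2 := by
    rw [norm_sq_eq, mul_pow, frob_sq, norm_sq_eq, Finset.sum_mul]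
    apply Finset.sum_le_sum
    intro i _
    rw [mApp_apply]
    exact Finset.sum_mul_sq_le_sq_mul_sq _ _ _
  exact le_of_pow_le_pow_left₀ (by norm_num) (mul_nonneg (frob_nonneg _) (norm_nonneg _)) h1


-- outer algebra
lemma outer_apply (u v : E d) (i j : Fin d) : outer u v i j = u i * v j := rfl

lemma transpose_outer (u v : E d) : (outer u v)ᵀ = outer v u := by
  ext i j; simp [outer, mul_comm]

lemma mul_outer (A : Mat d) (u v : E d) : A * outer u v = outer (mApp A u) v := by
  ext i j
  simp [Matrix.mul_apply, outer, mApp_apply, Finset.sum_mul, mul_assoc]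

lemma outer_mul (u v : E d) (A : Mat d) : outer u v * A = outer u (mApp Aᵀ v) := by
  ext i j
  simp only [Matrix.mul_apply, outer, Matrix.of_apply, mApp_apply, Matrix.transpose_apply,
    Finset.mul_sum]
  exact Finset.sum_congr rfl fun k _ => by ring

lemma outer_mul_outer (u v w z : E d) : outer u v * outer w z = dot v w • outer u z := by
  ext i j
  simp only [Matrix.mul_apply, outer, Matrix.of_apply, Matrix.smul_apply, dot, smul_eq_mul,
    Finset.sum_mul]
  exact Finset.sum_congr rfl fun k _ => by ring

lemma mApp_outer_apply (u v w : E d) (i : Fin d) :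
    mApp (outer u v) w i = dot v w * u i := by
  rw [mApp_apply, dot, Finset.sum_mul]
  exact Finset.sum_congr rfl fun k _ => by simp [outer]; ring

-- projection identities
lemma frob_sub_proj_sq (M : Mat d) (s : E d) (hs : s ≠ 0) :
    frob (M - (‖s‖^2)⁻¹ • outer (mApp M s) s) ^ 2
      = frob M ^ 2 - ‖mApp M s‖ ^ 2 / ‖s‖ ^ 2 := by
  have hn : (0:ℝ) < ‖s‖ ^ 2 := by
    have := norm_pos_iff.mpr hs; positivity
  rw [frob_sq, frob_sq]
  have hrow : ∀ i, ∑ j, ((M - (‖s‖^2)⁻¹ • outer (mApp M s) s) i j) ^ 2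
      = (∑ j, M i j ^ 2) - mApp M s i ^ 2 / ‖s‖ ^ 2 := by
    intro i
    have hb : ∑ j, M i j * s j = mApp M s i := (mApp_apply M s i).symm
    have hss : ∑ j, s j ^ 2 = ‖s‖ ^ 2 := (norm_sq_eq s).symm
    have expand : ∀ j, ((M - (‖s‖^2)⁻¹ • outer (mApp M s) s) i j) ^ 2
        = M i j ^ 2 - (2 * (‖s‖^2)⁻¹ * mApp M s i) * (M i j * s j)
          + ((‖s‖^2)⁻¹ * (‖s‖^2)⁻¹ * mApp M s i ^ 2) * s j ^ 2 := by
      intro j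
      simp only [Matrix.sub_apply, Matrix.smul_apply, outer, Matrix.of_apply, smul_eq_mul]
      ring
    rw [Finset.sum_congr rfl fun j _ => expand j]
    rw [Finset.sum_add_distrib, Finset.sum_sub_distrib, ← Finset.mul_sum, ← Finset.mul_sum,
      hb, hss]
    field_simp
    ring
  rw [Finset.sum_congr rfl fun i _ => hrow i, Finset.sum_sub_distrib]
  congr 1
  rw [← Finset.sum_div, ← norm_sq_eq]

lemma mul_proj_eq (M : Mat d) (s : E d) :
    M * (1 - (‖s‖^2)⁻¹ • outer s s) = M - (‖s‖^2)⁻¹ • outer (mApp M s) s := by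
  rw [mul_sub, mul_one, mul_smul_comm, mul_outer]

lemma frob_mul_proj_sq (M : Mat d) (s : E d) (hs : s ≠ 0) :
    frob (M * (1 - (‖s‖^2)⁻¹ • outer s s)) ^ 2
      = frob M ^ 2 - ‖mApp M s‖ ^ 2 / ‖s‖ ^ 2 := by
  rw [mul_proj_eq]; exact frob_sub_proj_sq M s hs

lemma transpose_proj (s : E d) :
    (1 - (‖s‖^2)⁻¹ • outer s s)ᵀ = 1 - (‖s‖^2)⁻¹ • outer s s := by
  rw [Matrix.transpose_sub, Matrix.transpose_one, Matrix.transpose_smul, transpose_outer]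

lemma frob_proj_mul_le (M : Mat d) (s : E d) (hs : s ≠ 0) :
    frob ((1 - (‖s‖^2)⁻¹ • outer s s) * M) ≤ frob M := by
  have h1 : (1 - (‖s‖^2)⁻¹ • outer s s) * M = (Mᵀ * (1 - (‖s‖^2)⁻¹ • outer s s))ᵀ := by
    rw [Matrix.transpose_mul, transpose_proj, Matrix.transpose_transpose]
  rw [h1, frob_transpose]
  have h2 := frob_mul_proj_sq Mᵀ s hs
  have h3 : frob (Mᵀ * (1 - (‖s‖^2)⁻¹ • outer s s)) ^ 2 ≤ frob M ^ 2 := by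
    rw [h2, frob_transpose]
    have : 0 ≤ ‖mApp Mᵀ s‖ ^ 2 / ‖s‖ ^ 2 := by positivity
    linarith
  exact le_of_pow_le_pow_left₀ (by norm_num) (frob_nonneg _) h3

-- master identity
lemma master (A : Mat d) (hA : Aᵀ = A) (sh yh : E d) (hsh : sh ≠ 0) (c : ℝ) (hc : c ≠ 0) :
    (1 - c⁻¹ • outer yh sh) * A * (1 - c⁻¹ • outer sh yh) + c⁻¹ • outer yh yh - 1 =
    ((1 - (‖sh‖^2)⁻¹ • outer sh sh) * (A - 1) * (1 - (‖sh‖^2)⁻¹ • outer sh sh)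
      + outer ((‖sh‖^2)⁻¹ • sh - c⁻¹ • yh) (mApp A sh)
      + outer (mApp A sh) ((‖sh‖^2)⁻¹ • sh - c⁻¹ • yh))
      + (dot sh (mApp A sh) • ((c⁻¹*c⁻¹) • outer yh yh - ((‖sh‖^2)⁻¹*(‖sh‖^2)⁻¹) • outer sh sh)
      + (c⁻¹ • outer yh yh - (‖sh‖^2)⁻¹ • outer sh sh)) := by
  have hn : (0:ℝ) < ‖sh‖ ^ 2 := by
    have := norm_pos_iff.mpr hsh; positivity
  have hn' : (‖sh‖^2 : ℝ) ≠ 0 := ne_of_gt hn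
  have hdots : dot sh sh = ‖sh‖ ^ 2 := dot_self sh
  have hX : (A - 1)ᵀ = A - 1 := by rw [Matrix.transpose_sub, Matrix.transpose_one, hA]
  simp only [mul_sub, sub_mul, mul_one, one_mul, smul_mul_assoc, mul_smul_comm,
    mul_outer, outer_mul, outer_mul_outer, hA, hX, smul_smul, mApp_sub, mApp_one]
  ext i j
  have hd : dot (mApp A sh) sh = dot sh (mApp A sh) := dot_comm _ _
  simp only [Matrix.add_apply, Matrix.sub_apply, Matrix.smul_apply, outer_apply,
    Matrix.one_apply, smul_eq_mul, PiLp.sub_apply, PiLp.smul_apply, smul_eq_mul,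
    mApp_outer_apply, dot_sub_left, hdots, hd]
  by_cases h : i = j <;> simp only [h, if_true, if_false] <;> field_simp <;> ring


lemma outer_smul_smul (t r : ℝ) (u v : E d) :
    outer (t • u) (r • v) = (t * r) • outer u v := by
  ext i j; simp [outer]; ring

lemma outer_smul_right (r : ℝ) (u v : E d) : outer u (r • v) = r • outer u v := by
  ext i j; simp [outer]; ring

-- T3 and T4 decompositions
lemma outer_diff_decomp (q p : E d) :
    outer q q - outer p p = outer (q - p) q + outer p (q - p) := by
  ext i j; simp [outer]; ring

lemma outer_diff_decomp' (yh sh q p : E d) :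
    outer yh q - outer sh p = outer (yh - sh) q + outer sh (q - p) := by
  ext i j; simp [outer]; ring

/-- norm of component orthogonal to s is at most norm -/
lemma norm_orth_le (u s : E d) (hs : s ≠ 0) :
    ‖u - (dot u s / ‖s‖ ^ 2) • s‖ ≤ ‖u‖ := by
  have hn : (0:ℝ) < ‖s‖ ^ 2 := by have := norm_pos_iff.mpr hs; positivity
  have h1 : ‖u - (dot u s / ‖s‖ ^ 2) • s‖ ^ 2 ≤ ‖u‖ ^ 2 := by
    set t : ℝ := dot u s / ‖s‖ ^ 2 with ht
    have e1 : ‖u - t • s‖ ^ 2 = ‖u‖ ^ 2 - 2 * (t * dot u s) + t ^ 2 * ‖s‖ ^ 2 := by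
      rw [@norm_sub_sq_real _ _ _ u (t • s), real_inner_smul_right, norm_smul]
      rw [dot_eq_inner, real_inner_comm]
      simp [mul_pow, sq_abs]
      try ring
    rw [e1, ht]
    have h2 : (dot u s / ‖s‖ ^ 2) ^ 2 * ‖s‖ ^ 2 = dot u s / ‖s‖ ^ 2 * dot u s := by
      field_simp
    rw [h2]
    have h3 : 0 ≤ dot u s / ‖s‖ ^ 2 * dot u s := by
      rw [div_mul_eq_mul_div, ← sq]
      positivity
    linarith
  exact le_of_pow_le_pow_left₀ (by norm_num) (norm_nonneg _) h1



lemma hat_dfp (sqH Bk : Mat d) (hT : sqHᵀ = sqH) (hinv : sqH⁻¹ * sqH = 1)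
    (s y : E d) :
    sqH⁻¹ * dfpUpdate Bk s y * sqH⁻¹ =
      (1 - (dot y s)⁻¹ • outer (mApp sqH⁻¹ y) (mApp sqH s)) * (sqH⁻¹ * Bk * sqH⁻¹)
        * (1 - (dot y s)⁻¹ • outer (mApp sqH s) (mApp sqH⁻¹ y))
      + (dot y s)⁻¹ • outer (mApp sqH⁻¹ y) (mApp sqH⁻¹ y) := by
  have hTi : (sqH⁻¹)ᵀ = sqH⁻¹ := by rw [Matrix.transpose_nonsing_inv, hT]
  have h1 : mApp sqH⁻¹ (mApp sqH s) = s := by rw [← mApp_mul, hinv, mApp_one]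
  set c : ℝ := dot y s with hc
  set sh := mApp sqH s with hsh
  set yh := mApp sqH⁻¹ y with hyh
  have e1 : sqH⁻¹ * (1 - c⁻¹ • outer y s) = (1 - c⁻¹ • outer yh sh) * sqH⁻¹ := by
    rw [mul_sub, sub_mul, mul_one, one_mul, mul_smul_comm, smul_mul_assoc, mul_outer, outer_mul,
      hTi, h1]
  have e2 : (1 - c⁻¹ • outer s y) * sqH⁻¹ = sqH⁻¹ * (1 - c⁻¹ • outer sh yh) := by
    rw [mul_sub, sub_mul, mul_one, one_mul, mul_smul_comm, smul_mul_assoc, mul_outer, outer_mul,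
      hTi, h1]
  have e3 : sqH⁻¹ * (c⁻¹ • outer y y) * sqH⁻¹ = c⁻¹ • outer yh yh := by
    rw [mul_smul_comm, smul_mul_assoc, mul_outer, outer_mul, hTi]
  rw [dfpUpdate, dot_comm s y, ← hc, mul_add, add_mul, e3]
  congr 1
  calc sqH⁻¹ * ((1 - c⁻¹ • outer y s) * Bk * (1 - c⁻¹ • outer s y)) * sqH⁻¹
      = (sqH⁻¹ * (1 - c⁻¹ • outer y s)) * Bk * ((1 - c⁻¹ • outer s y) * sqH⁻¹) := by
        simp only [mul_assoc]
    _ = ((1 - c⁻¹ • outer yh sh) * sqH⁻¹) * Bk * (sqH⁻¹ * (1 - c⁻¹ • outer sh yh)) := by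
        rw [e1, e2]
    _ = (1 - c⁻¹ • outer yh sh) * (sqH⁻¹ * Bk * sqH⁻¹) * (1 - c⁻¹ • outer sh yh) := by
        simp only [mul_assoc]


lemma sqrt_drop (F Ep dl : ℝ) (hF0 : 0 ≤ F) (hFd : F ≤ dl) (hd : 0 < dl) (hE0 : 0 ≤ Ep)
    (hEF : Ep ≤ F ^ 2) : Real.sqrt (F ^ 2 - Ep) ≤ F - Ep / (2 * dl) := by
  set t : ℝ := Ep / (2 * dl) with ht
  have ht2 : Ep = t * (2 * dl) := by rw [ht]; field_simp
  have ht0 : 0 ≤ t := by positivity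
  have h1 : 0 ≤ F - t := by nlinarith
  have h2 : F ^ 2 - Ep ≤ (F - t) ^ 2 := by nlinarith
  calc Real.sqrt (F ^ 2 - Ep) ≤ Real.sqrt ((F - t) ^ 2) := Real.sqrt_le_sqrt h2
    _ = F - t := Real.sqrt_sq h1

lemma budget (τ a m : ℝ) (h0 : 0 ≤ τ) (h1 : τ < 1) (hm : 0 < m) (ha : 0 ≤ a) :
    (τ / ((1 - τ) * m)) * (a * m) + (a * m) * (τ / ((1 - τ) * m))
      + (m * (a * m)) * ((τ / ((1 - τ) * m)) * ((1 + τ) / ((1 - τ) * m) + 1 / m))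
      + (τ * m * ((1 + τ) / ((1 - τ) * m)) + m * (τ / ((1 - τ) * m)))
      ≤ (a * (4 / (1 - τ)) + a * (4 * τ / (1 - τ) ^ 2) + (3 + τ) / (1 - τ)) * τ := by
  have hβ : (0:ℝ) < 1 - τ := by linarith
  have hβ2 : (0:ℝ) < (1 - τ) ^ 2 := by positivity
  have eL : (τ / ((1 - τ) * m)) * (a * m) + (a * m) * (τ / ((1 - τ) * m))
      + (m * (a * m)) * ((τ / ((1 - τ) * m)) * ((1 + τ) / ((1 - τ) * m) + 1 / m))
      + (τ * m * ((1 + τ) / ((1 - τ) * m)) + m * (τ / ((1 - τ) * m)))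
      = (3 * a * τ * (1 - τ) + a * τ * (1 + τ) + τ * (2 + τ) * (1 - τ)) / (1 - τ) ^ 2 := by
    field_simp
    ring
  have eR : (a * (4 / (1 - τ)) + a * (4 * τ / (1 - τ) ^ 2) + (3 + τ) / (1 - τ)) * τ
      = (4 * a * τ * (1 - τ) + 4 * a * τ ^ 2 + (3 + τ) * τ * (1 - τ)) / (1 - τ) ^ 2 := by
    field_simp
  rw [eL, eR, div_le_div_iff_of_pos_right hβ2]
  nlinarith [mul_nonneg (mul_nonneg ha h0) h0, mul_nonneg h0 hβ.le]

end DFPaux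

set_option maxHeartbeats 2000000 in
open DFPaux in

theorem dfp_potential_decrease
    {d : ℕ}
    (f : E d → ℝ) (g : E d → E d) (Hess : E d → Mat d) (xs : E d)
    (μ L M : ℝ) (hμ : 0 < μ) (hμL : μ ≤ L) (hM : 0 < M)
    -- `g` is the gradient of `f`, and `Hess` its Hessian (so `f` is twice differentiable)
    (hg : ∀ x, HasGradientAt f (g x) x)
    (hHd : ∀ x, HasFDerivAt g (Matrix.toEuclideanCLM (𝕜 := ℝ) (Hess x)) x)
    -- `xs` is the unique minimizer of `f`
    (hmin : ∀ x, f xs ≤ f x)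
    (huniq : ∀ x, (∀ y, f x ≤ f y) → x = xs)
    -- Assumption 1: strong convexity and gradient Lipschitz continuity
    (hgl : ∀ x y, μ * ‖x - y‖ ≤ ‖g x - g y‖)
    (hgu : ∀ x y, ‖g x - g y‖ ≤ L * ‖x - y‖)
    (hHl : ∀ x v, μ * ‖v‖ ^ 2 ≤ dot v (mApp (Hess x) v))
    (hHu : ∀ x v, dot v (mApp (Hess x) v) ≤ L * ‖v‖ ^ 2)
    -- Assumption 2: Hessian Lipschitz continuity toward the optimum
    (hLip : ∀ x, spec (Hess x - Hess xs) ≤ M * ‖x - xs‖)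
    -- `sqH` is the positive definite square root `H_*^{1/2}` of `H_* = ∇²f(x_*)`
    (sqH : Mat d) (hsqH : sqH.PosDef) (hsqH2 : sqH * sqH = Hess xs)
    (δ : ℝ) (hδ : 0 < δ)
    -- one step of the DFP method: current iterate `xk`, Hessian approximation `Bk`
    (xk xk1 : E d) (Bk : Mat d) (hBkpd : Bk.PosDef)
    (hxk1 : xk1 = xk - mApp Bk⁻¹ (g xk))
    (hs : xk1 - xk ≠ 0)
    (hτ : tauP M μ sqH xs xk xk1 < 1)
    (hB : frob (sqH⁻¹ * Bk * sqH⁻¹ - 1) ≤ δ) :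
    frob (sqH⁻¹ * dfpUpdate Bk (xk1 - xk) (g xk1 - g xk) * sqH⁻¹ - 1) ≤
      frob (sqH⁻¹ * Bk * sqH⁻¹ - 1)
        - ‖mApp (sqH⁻¹ * Bk * sqH⁻¹ - 1) (mApp sqH (xk1 - xk))‖ ^ 2
            / (2 * δ * ‖mApp sqH (xk1 - xk)‖ ^ 2)
        + (spec (sqH⁻¹ * Bk * sqH⁻¹) * (4 / (1 - tauP M μ sqH xs xk xk1))
            + spec (sqH⁻¹ * Bk * sqH⁻¹) *
                (4 * tauP M μ sqH xs xk xk1 / (1 - tauP M μ sqH xs xk xk1) ^ 2)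
            + (3 + tauP M μ sqH xs xk xk1) / (1 - tauP M μ sqH xs xk xk1))
          * tauP M μ sqH xs xk xk1 := by
  have hdet : IsUnit sqH.det := isUnit_iff_ne_zero.mpr (ne_of_gt hsqH.det_pos)
  have hinv : sqH⁻¹ * sqH = 1 := Matrix.nonsing_inv_mul _ hdet
  have hinv' : sqH * sqH⁻¹ = 1 := Matrix.mul_nonsing_inv _ hdet
  have hT : sqHᵀ = sqH := by
    ext i j
    have h := congrFun (congrFun hsqH.1 i) j
    rw [Matrix.transpose_apply]
    simpa using h
  have hTi : (sqH⁻¹)ᵀ = sqH⁻¹ := by rw [Matrix.transpose_nonsing_inv, hT]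
  have hBsym : Bkᵀ = Bk := by
    ext i j
    have h := congrFun (congrFun hBkpd.1 i) j
    rw [Matrix.transpose_apply]
    simpa using h
  set τ : ℝ := tauP M μ sqH xs xk xk1 with hτdef
  set s : E d := xk1 - xk with hsdef
  set y : E d := g xk1 - g xk with hydef
  set sh : E d := mApp sqH s with hshdef
  set yh : E d := mApp sqH⁻¹ y with hyhdef
  set A : Mat d := sqH⁻¹ * Bk * sqH⁻¹ with hAdef
  have hA_symm : Aᵀ = A := by
    rw [hAdef, Matrix.transpose_mul, Matrix.transpose_mul, hTi, hBsym, mul_assoc]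
  have h1 : mApp sqH⁻¹ sh = s := by rw [hshdef, ← mApp_mul, hinv, mApp_one]
  have hsh0 : sh ≠ 0 := by
    intro h
    apply hs
    have : s = 0 := by rw [← h1, h, mApp, map_zero]
    exact this
  have hm : 0 < ‖sh‖ := norm_pos_iff.mpr hsh0
  have hm2 : 0 < ‖sh‖ ^ 2 := by positivity
  have hτ0 : 0 ≤ τ := by
    have h0 : 0 ≤ sig M μ sqH xs xk :=
      mul_nonneg (div_nonneg hM.le (Real.rpow_nonneg hμ.le _)) (norm_nonneg _)
    exact le_trans h0 (le_max_left _ _)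
  have hτ1 : τ < 1 := hτ
  have hβ : (0:ℝ) < 1 - τ := by linarith
  -- operator bounds from strong convexity
  have hμs : 0 < Real.sqrt μ := Real.sqrt_pos.mpr hμ
  have hkey : ∀ v : E d, Real.sqrt μ * ‖v‖ ≤ ‖mApp sqH v‖ := by
    intro v
    have h2 : μ * ‖v‖ ^ 2 ≤ ‖mApp sqH v‖ ^ 2 := by
      have h3 := hHl xs v
      have e : dot v (mApp (Hess xs) v) = ‖mApp sqH v‖ ^ 2 := by
        rw [← dot_self, dot_mApp_left, hT, ← mApp_mul, hsqH2]
      linarith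
    have h4 : (Real.sqrt μ * ‖v‖) ^ 2 ≤ ‖mApp sqH v‖ ^ 2 := by
      rw [mul_pow, Real.sq_sqrt hμ.le]; exact h2
    exact le_of_pow_le_pow_left₀ (by norm_num) (norm_nonneg _) h4
  have hinvb : ∀ w : E d, ‖mApp sqH⁻¹ w‖ ≤ (Real.sqrt μ)⁻¹ * ‖w‖ := by
    intro w
    have h3 := hkey (mApp sqH⁻¹ w)
    rw [← mApp_mul, hinv', mApp_one] at h3
    calc ‖mApp sqH⁻¹ w‖ = (Real.sqrt μ)⁻¹ * (Real.sqrt μ * ‖mApp sqH⁻¹ w‖) := by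
          field_simp
      _ ≤ (Real.sqrt μ)⁻¹ * ‖w‖ := by
          exact mul_le_mul_of_nonneg_left h3 (by positivity)
  have hspecinv : spec sqH⁻¹ ≤ (Real.sqrt μ)⁻¹ := spec_le_bound _ (by positivity) hinvb
  -- Part (a): ‖yh - sh‖ ≤ τ * ‖sh‖
  have hu : ‖yh - sh‖ ≤ τ * ‖sh‖ := by
    set R : ℝ := max ‖mApp sqH (xk - xs)‖ ‖mApp sqH (xk1 - xs)‖ with hR
    set Dm : ℝ := max ‖xk - xs‖ ‖xk1 - xs‖ with hDm
    have hDm0 : 0 ≤ Dm := le_trans (norm_nonneg _) (le_max_left _ _)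
    have hseg : ∀ z ∈ segment ℝ xk xk1, ‖z - xs‖ ≤ Dm := by
      rintro z ⟨a, b, ha, hb, hab, rfl⟩
      have e1 : a • xk + b • xk1 - xs = a • (xk - xs) + b • (xk1 - xs) := by
        match_scalars <;> linarith
      rw [e1]
      calc ‖a • (xk - xs) + b • (xk1 - xs)‖
          ≤ ‖a • (xk - xs)‖ + ‖b • (xk1 - xs)‖ := norm_add_le _ _
        _ = a * ‖xk - xs‖ + b * ‖xk1 - xs‖ := by
            rw [norm_smul, norm_smul, Real.norm_eq_abs, Real.norm_eq_abs,
              abs_of_nonneg ha, abs_of_nonneg hb]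
        _ ≤ a * Dm + b * Dm := by
            have g1 := le_max_left ‖xk - xs‖ ‖xk1 - xs‖
            have g2 := le_max_right ‖xk - xs‖ ‖xk1 - xs‖
            have := mul_le_mul_of_nonneg_left g1 ha
            have := mul_le_mul_of_nonneg_left g2 hb
            rw [hDm]
            linarith
        _ = Dm := by rw [← add_mul, hab, one_mul]
    have hFd : ∀ z, HasFDerivAt (fun x => mApp sqH⁻¹ (g x) - mApp sqH x)
        (Matrix.toEuclideanCLM (𝕜 := ℝ) (sqH⁻¹ * Hess z - sqH)) z := by
      intro z
      have h4 : HasFDerivAt (fun x => mApp sqH⁻¹ (g x))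
          ((Matrix.toEuclideanCLM (𝕜 := ℝ) sqH⁻¹).comp
            (Matrix.toEuclideanCLM (𝕜 := ℝ) (Hess z))) z :=
        (Matrix.toEuclideanCLM (𝕜 := ℝ) sqH⁻¹).hasFDerivAt.comp z (hHd z)
      have h5 : HasFDerivAt (fun x : E d => mApp sqH x)
          (Matrix.toEuclideanCLM (𝕜 := ℝ) sqH) z :=
        (Matrix.toEuclideanCLM (𝕜 := ℝ) sqH).hasFDerivAt
      have h6 := h4.sub h5
      have e2 : Matrix.toEuclideanCLM (𝕜 := ℝ) (sqH⁻¹ * Hess z - sqH)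
          = (Matrix.toEuclideanCLM (𝕜 := ℝ) sqH⁻¹).comp
              (Matrix.toEuclideanCLM (𝕜 := ℝ) (Hess z))
            - Matrix.toEuclideanCLM (𝕜 := ℝ) sqH := by
        rw [map_sub, _root_.map_mul]; rfl
      rw [e2]; exact h6
    set C : ℝ := (Real.sqrt μ)⁻¹ * (M * Dm) with hC
    have hbound : ∀ z ∈ segment ℝ xk xk1,
        ‖Matrix.toEuclideanCLM (𝕜 := ℝ) (sqH⁻¹ * Hess z - sqH)‖ ≤ C := by
      intro z hz
      have e7 : sqH⁻¹ * Hess z - sqH = sqH⁻¹ * (Hess z - Hess xs) := by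
        rw [mul_sub]
        congr 1
        rw [← hsqH2, ← mul_assoc, hinv, one_mul]
      have e7' : ‖Matrix.toEuclideanCLM (𝕜 := ℝ) (sqH⁻¹ * Hess z - sqH)‖
          = spec (sqH⁻¹ * (Hess z - Hess xs)) := by rw [e7]; rfl
      rw [e7']
      calc spec (sqH⁻¹ * (Hess z - Hess xs))
          ≤ spec sqH⁻¹ * spec (Hess z - Hess xs) := spec_mul_le _ _
        _ ≤ (Real.sqrt μ)⁻¹ * (M * ‖z - xs‖) :=
            mul_le_mul hspecinv (hLip z) (spec_nonneg _) (by positivity)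
        _ ≤ C := by
            rw [hC]
            exact mul_le_mul_of_nonneg_left
              (mul_le_mul_of_nonneg_left (hseg z hz) hM.le) (by positivity)
    have hmvt := Convex.norm_image_sub_le_of_norm_hasFDerivWithin_le
      (f := fun x => mApp sqH⁻¹ (g x) - mApp sqH x)
      (f' := fun z => Matrix.toEuclideanCLM (𝕜 := ℝ) (sqH⁻¹ * Hess z - sqH))
      (fun z _ => (hFd z).hasFDerivWithinAt) hbound (convex_segment xk xk1)
      (left_mem_segment ℝ xk xk1) (right_mem_segment ℝ xk xk1)
    have e8 : (mApp sqH⁻¹ (g xk1) - mApp sqH xk1) - (mApp sqH⁻¹ (g xk) - mApp sqH xk)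
        = yh - sh := by
      rw [hyhdef, hshdef, hydef, hsdef]
      simp only [mApp, map_sub]
      abel
    rw [e8] at hmvt
    have hsnorm : ‖s‖ ≤ (Real.sqrt μ)⁻¹ * ‖sh‖ := by
      conv_lhs => rw [← h1]
      exact hinvb sh
    have hDmb : Dm ≤ (Real.sqrt μ)⁻¹ * R := by
      rw [hDm]
      apply max_le
      · calc ‖xk - xs‖ = ‖mApp sqH⁻¹ (mApp sqH (xk - xs))‖ := by
              rw [← mApp_mul, hinv, mApp_one]
          _ ≤ (Real.sqrt μ)⁻¹ * ‖mApp sqH (xk - xs)‖ := hinvb _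
          _ ≤ (Real.sqrt μ)⁻¹ * R :=
              mul_le_mul_of_nonneg_left (le_max_left _ _) (by positivity)
      · calc ‖xk1 - xs‖ = ‖mApp sqH⁻¹ (mApp sqH (xk1 - xs))‖ := by
              rw [← mApp_mul, hinv, mApp_one]
          _ ≤ (Real.sqrt μ)⁻¹ * ‖mApp sqH (xk1 - xs)‖ := hinvb _
          _ ≤ (Real.sqrt μ)⁻¹ * R :=
              mul_le_mul_of_nonneg_left (le_max_right _ _) (by positivity)
    have hτeq : τ = M / μ ^ ((3:ℝ)/2) * R := by
      rw [hτdef, tauP, sig, sig, hR]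
      exact (mul_max_of_nonneg _ _ (div_nonneg hM.le (Real.rpow_nonneg hμ.le _))).symm
    have h32 : (Real.sqrt μ)⁻¹ * ((Real.sqrt μ)⁻¹ * (Real.sqrt μ)⁻¹) = (μ ^ ((3:ℝ)/2))⁻¹ := by
      have e9 : μ ^ ((3:ℝ)/2) = Real.sqrt μ ^ (3:ℕ) := by
        rw [Real.sqrt_eq_rpow, ← Real.rpow_natCast (μ ^ ((1:ℝ)/2)) 3, ← Real.rpow_mul hμ.le]
        norm_num
      rw [e9]
      ring
    have hR0 : 0 ≤ R := le_trans (norm_nonneg _) (le_max_left _ _)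
    calc ‖yh - sh‖ ≤ C * ‖s‖ := hmvt
      _ ≤ ((Real.sqrt μ)⁻¹ * (M * ((Real.sqrt μ)⁻¹ * R))) * ((Real.sqrt μ)⁻¹ * ‖sh‖) := by
          apply mul_le_mul _ hsnorm (norm_nonneg _) (by positivity)
          rw [hC]
          exact mul_le_mul_of_nonneg_left
            (mul_le_mul_of_nonneg_left hDmb hM.le) (by positivity)
      _ = (M / μ ^ ((3:ℝ)/2) * R) * ‖sh‖ := by
          rw [div_eq_mul_inv, ← h32]
          ring
      _ = τ * ‖sh‖ := by rw [hτeq]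
  -- scalar facts
  have hceq : dot yh sh = dot y s := by
    rw [hyhdef, dot_mApp_left, hTi, h1]
  have hun : dot (yh - sh) sh = dot y s - ‖sh‖ ^ 2 := by
    rw [dot_sub_left, hceq, dot_self]
  have hdlow : -(τ * ‖sh‖ ^ 2) ≤ dot (yh - sh) sh := by
    have h5 := abs_dot_le (yh - sh) sh
    have h6 : -(‖yh - sh‖ * ‖sh‖) ≤ dot (yh - sh) sh := by
      have := neg_abs_le (dot (yh - sh) sh)
      linarith
    have h7 : ‖yh - sh‖ * ‖sh‖ ≤ τ * ‖sh‖ * ‖sh‖ :=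
      mul_le_mul_of_nonneg_right hu (norm_nonneg _)
    nlinarith
  have hcl : (1 - τ) * ‖sh‖ ^ 2 ≤ dot y s := by nlinarith
  have hcpos : 0 < dot y s := lt_of_lt_of_le (by nlinarith) hcl
  have hcne : dot y s ≠ 0 := ne_of_gt hcpos
  -- rewrite the update
  have hhat := hat_dfp sqH Bk hT hinv s y
  rw [← hshdef, ← hyhdef, ← hAdef] at hhat
  have hmaster := master A hA_symm sh yh hsh0 (dot y s) hcne
  rw [hhat, hmaster]
  set w : E d := (‖sh‖ ^ 2)⁻¹ • sh - (dot y s)⁻¹ • yh with hwdef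
  set av : E d := mApp A sh with havdef
  set q : E d := (dot y s)⁻¹ • yh with hqdef
  set p : E d := (‖sh‖ ^ 2)⁻¹ • sh with hpdef
  -- vector norm bounds
  have hab2 : ‖av‖ ≤ spec A * ‖sh‖ := norm_mApp_le_spec A sh
  have hdotb : |dot sh av| ≤ ‖sh‖ * (spec A * ‖sh‖) :=
    le_trans (abs_dot_le _ _) (mul_le_mul_of_nonneg_left hab2 (norm_nonneg _))
  have hweq : w = -((dot y s)⁻¹ • ((yh - sh) - (dot (yh - sh) sh / ‖sh‖ ^ 2) • sh)) := by
    rw [hwdef, hun]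
    match_scalars <;> field_simp <;> ring
  have hwnorm : ‖w‖ ≤ (dot y s)⁻¹ * (τ * ‖sh‖) := by
    rw [hweq, norm_neg, norm_smul, Real.norm_eq_abs, abs_of_pos (inv_pos.mpr hcpos)]
    exact mul_le_mul_of_nonneg_left
      (le_trans (norm_orth_le (yh - sh) sh hsh0) hu) (by positivity)
  have hwb : ‖w‖ ≤ τ / ((1 - τ) * ‖sh‖) := by
    rw [le_div_iff₀ (by positivity)]
    apply le_of_mul_le_mul_right _ hm
    calc ‖w‖ * ((1 - τ) * ‖sh‖) * ‖sh‖ = ‖w‖ * ((1 - τ) * ‖sh‖ ^ 2) := by ring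
      _ ≤ ‖w‖ * dot y s := mul_le_mul_of_nonneg_left hcl (norm_nonneg w)
      _ ≤ ((dot y s)⁻¹ * (τ * ‖sh‖)) * dot y s := mul_le_mul_of_nonneg_right hwnorm hcpos.le
      _ = τ * ‖sh‖ := by field_simp
  have hyhn : ‖yh‖ ≤ (1 + τ) * ‖sh‖ := by
    have e10 : yh = sh + (yh - sh) := by abel
    calc ‖yh‖ = ‖sh + (yh - sh)‖ := by rw [← e10]
      _ ≤ ‖sh‖ + ‖yh - sh‖ := norm_add_le _ _
      _ ≤ ‖sh‖ + τ * ‖sh‖ := by linarith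
      _ = (1 + τ) * ‖sh‖ := by ring
  have hqnorm : ‖q‖ = (dot y s)⁻¹ * ‖yh‖ := by
    rw [hqdef, norm_smul, Real.norm_eq_abs, abs_of_pos (inv_pos.mpr hcpos)]
  have hqb : ‖q‖ ≤ (1 + τ) / ((1 - τ) * ‖sh‖) := by
    rw [le_div_iff₀ (by positivity)]
    apply le_of_mul_le_mul_right _ hm
    calc ‖q‖ * ((1 - τ) * ‖sh‖) * ‖sh‖ = ‖q‖ * ((1 - τ) * ‖sh‖ ^ 2) := by ring
      _ ≤ ‖q‖ * dot y s := mul_le_mul_of_nonneg_left hcl (norm_nonneg q)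
      _ = ((dot y s)⁻¹ * ‖yh‖) * dot y s := by rw [hqnorm]
      _ = ‖yh‖ := by field_simp
      _ ≤ (1 + τ) * ‖sh‖ := hyhn
  have hpb : ‖p‖ = 1 / ‖sh‖ := by
    rw [hpdef, norm_smul, Real.norm_eq_abs, abs_of_pos (inv_pos.mpr hm2)]
    rw [eq_div_iff hm.ne']
    field_simp
  have hqp : q - p = -w := by rw [hqdef, hpdef, hwdef]; abel
  -- Frobenius bounds on error terms
  have hfT1 : frob (outer w av) ≤ (τ / ((1 - τ) * ‖sh‖)) * (spec A * ‖sh‖) := by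
    rw [frob_outer]
    exact mul_le_mul hwb hab2 (norm_nonneg _) (by positivity)
  have hfT2 : frob (outer av w) ≤ (spec A * ‖sh‖) * (τ / ((1 - τ) * ‖sh‖)) := by
    rw [frob_outer]
    exact mul_le_mul hab2 hwb (norm_nonneg _) (mul_nonneg (spec_nonneg _) hm.le)
  have hT3eq : dot sh av • (((dot y s)⁻¹ * (dot y s)⁻¹) • outer yh yh
      - ((‖sh‖ ^ 2)⁻¹ * (‖sh‖ ^ 2)⁻¹) • outer sh sh)
      = dot sh av • (outer (q - p) q + outer p (q - p)) := by
    rw [hqdef, hpdef, ← outer_smul_smul, ← outer_smul_smul, outer_diff_decomp]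
  have hfT3 : frob (dot sh av • (((dot y s)⁻¹ * (dot y s)⁻¹) • outer yh yh
      - ((‖sh‖ ^ 2)⁻¹ * (‖sh‖ ^ 2)⁻¹) • outer sh sh))
      ≤ (‖sh‖ * (spec A * ‖sh‖)) * ((τ / ((1 - τ) * ‖sh‖))
          * ((1 + τ) / ((1 - τ) * ‖sh‖) + 1 / ‖sh‖)) := by
    rw [hT3eq, frob_smul]
    have hin : frob (outer (q - p) q + outer p (q - p))
        ≤ ‖w‖ * ‖q‖ + ‖p‖ * ‖w‖ := by
      calc frob (outer (q - p) q + outer p (q - p))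
          ≤ frob (outer (q - p) q) + frob (outer p (q - p)) := frob_add_le _ _
        _ = ‖q - p‖ * ‖q‖ + ‖p‖ * ‖q - p‖ := by rw [frob_outer, frob_outer]
        _ = ‖w‖ * ‖q‖ + ‖p‖ * ‖w‖ := by rw [hqp, norm_neg]
    have hin2 : ‖w‖ * ‖q‖ + ‖p‖ * ‖w‖
        ≤ (τ / ((1 - τ) * ‖sh‖)) * ((1 + τ) / ((1 - τ) * ‖sh‖) + 1 / ‖sh‖) := by
      have b1 : ‖w‖ * ‖q‖ ≤ (τ / ((1 - τ) * ‖sh‖)) * ((1 + τ) / ((1 - τ) * ‖sh‖)) :=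
        mul_le_mul hwb hqb (norm_nonneg _) (by positivity)
      have b2 : ‖p‖ * ‖w‖ ≤ (1 / ‖sh‖) * (τ / ((1 - τ) * ‖sh‖)) := by
        rw [hpb]
        exact mul_le_mul_of_nonneg_left hwb (by positivity)
      calc ‖w‖ * ‖q‖ + ‖p‖ * ‖w‖
          ≤ (τ / ((1 - τ) * ‖sh‖)) * ((1 + τ) / ((1 - τ) * ‖sh‖))
            + (1 / ‖sh‖) * (τ / ((1 - τ) * ‖sh‖)) := add_le_add b1 b2
        _ = (τ / ((1 - τ) * ‖sh‖)) * ((1 + τ) / ((1 - τ) * ‖sh‖) + 1 / ‖sh‖) := by ring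
    calc |dot sh av| * frob (outer (q - p) q + outer p (q - p))
        ≤ (‖sh‖ * (spec A * ‖sh‖)) * (‖w‖ * ‖q‖ + ‖p‖ * ‖w‖) := by
          exact mul_le_mul hdotb hin (frob_nonneg _)
            (mul_nonneg hm.le (mul_nonneg (spec_nonneg _) hm.le))
      _ ≤ (‖sh‖ * (spec A * ‖sh‖)) * ((τ / ((1 - τ) * ‖sh‖))
            * ((1 + τ) / ((1 - τ) * ‖sh‖) + 1 / ‖sh‖)) := by
          exact mul_le_mul_of_nonneg_left hin2
            (mul_nonneg hm.le (mul_nonneg (spec_nonneg _) hm.le))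
  have hT4eq : (dot y s)⁻¹ • outer yh yh - (‖sh‖ ^ 2)⁻¹ • outer sh sh
      = outer (yh - sh) q + outer sh (q - p) := by
    rw [hqdef, hpdef, ← outer_smul_right, ← outer_smul_right, outer_diff_decomp']
  have hfT4 : frob ((dot y s)⁻¹ • outer yh yh - (‖sh‖ ^ 2)⁻¹ • outer sh sh)
      ≤ τ * ‖sh‖ * ((1 + τ) / ((1 - τ) * ‖sh‖)) + ‖sh‖ * (τ / ((1 - τ) * ‖sh‖)) := by
    rw [hT4eq]
    calc frob (outer (yh - sh) q + outer sh (q - p))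
        ≤ frob (outer (yh - sh) q) + frob (outer sh (q - p)) := frob_add_le _ _
      _ = ‖yh - sh‖ * ‖q‖ + ‖sh‖ * ‖q - p‖ := by rw [frob_outer, frob_outer]
      _ = ‖yh - sh‖ * ‖q‖ + ‖sh‖ * ‖w‖ := by rw [hqp, norm_neg]
      _ ≤ τ * ‖sh‖ * ((1 + τ) / ((1 - τ) * ‖sh‖)) + ‖sh‖ * (τ / ((1 - τ) * ‖sh‖)) := by
          apply add_le_add
          · exact mul_le_mul hu hqb (norm_nonneg _) (by positivity)
          · exact mul_le_mul_of_nonneg_left hwb hm.le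
  -- the projected part
  have hQXQ : frob ((1 - (‖sh‖ ^ 2)⁻¹ • outer sh sh) * (A - 1) * (1 - (‖sh‖ ^ 2)⁻¹ • outer sh sh))
      ≤ frob (A - 1) - ‖mApp (A - 1) sh‖ ^ 2 / (2 * δ * ‖sh‖ ^ 2) := by
    have hXQ : frob ((A - 1) * (1 - (‖sh‖ ^ 2)⁻¹ • outer sh sh))
        = Real.sqrt (frob (A - 1) ^ 2 - ‖mApp (A - 1) sh‖ ^ 2 / ‖sh‖ ^ 2) := by
      rw [← Real.sqrt_sq (frob_nonneg ((A - 1) * (1 - (‖sh‖ ^ 2)⁻¹ • outer sh sh))),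
        frob_mul_proj_sq _ _ hsh0]
    have hEF : ‖mApp (A - 1) sh‖ ^ 2 / ‖sh‖ ^ 2 ≤ frob (A - 1) ^ 2 := by
      rw [div_le_iff₀ hm2]
      have h11 := norm_mApp_le_frob (A - 1) sh
      nlinarith [norm_nonneg (mApp (A - 1) sh), frob_nonneg (A - 1)]
    have hdrop := sqrt_drop (frob (A - 1)) (‖mApp (A - 1) sh‖ ^ 2 / ‖sh‖ ^ 2) δ
      (frob_nonneg _) hB hδ (by positivity) hEF
    have ediv : ‖mApp (A - 1) sh‖ ^ 2 / ‖sh‖ ^ 2 / (2 * δ)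
        = ‖mApp (A - 1) sh‖ ^ 2 / (2 * δ * ‖sh‖ ^ 2) := by
      rw [div_div]
      congr 1
      ring
    calc frob ((1 - (‖sh‖ ^ 2)⁻¹ • outer sh sh) * (A - 1) * (1 - (‖sh‖ ^ 2)⁻¹ • outer sh sh))
        = frob ((1 - (‖sh‖ ^ 2)⁻¹ • outer sh sh) * ((A - 1) * (1 - (‖sh‖ ^ 2)⁻¹ • outer sh sh))) := by
          rw [mul_assoc]
      _ ≤ frob ((A - 1) * (1 - (‖sh‖ ^ 2)⁻¹ • outer sh sh)) := frob_proj_mul_le _ _ hsh0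
      _ = Real.sqrt (frob (A - 1) ^ 2 - ‖mApp (A - 1) sh‖ ^ 2 / ‖sh‖ ^ 2) := hXQ
      _ ≤ frob (A - 1) - ‖mApp (A - 1) sh‖ ^ 2 / ‖sh‖ ^ 2 / (2 * δ) := hdrop
      _ = frob (A - 1) - ‖mApp (A - 1) sh‖ ^ 2 / (2 * δ * ‖sh‖ ^ 2) := by rw [ediv]
  -- budget
  have hbudget := budget τ (spec A) ‖sh‖ hτ0 hτ1 hm (spec_nonneg A)
  -- final combination
  calc frob ((1 - (‖sh‖ ^ 2)⁻¹ • outer sh sh) * (A - 1) * (1 - (‖sh‖ ^ 2)⁻¹ • outer sh sh)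
        + outer w av + outer av w
        + (dot sh av • (((dot y s)⁻¹ * (dot y s)⁻¹) • outer yh yh
            - ((‖sh‖ ^ 2)⁻¹ * (‖sh‖ ^ 2)⁻¹) • outer sh sh)
          + ((dot y s)⁻¹ • outer yh yh - (‖sh‖ ^ 2)⁻¹ • outer sh sh)))
      ≤ frob ((1 - (‖sh‖ ^ 2)⁻¹ • outer sh sh) * (A - 1) * (1 - (‖sh‖ ^ 2)⁻¹ • outer sh sh)
          + outer w av + outer av w)
        + frob (dot sh av • (((dot y s)⁻¹ * (dot y s)⁻¹) • outer yh yh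
            - ((‖sh‖ ^ 2)⁻¹ * (‖sh‖ ^ 2)⁻¹) • outer sh sh)
          + ((dot y s)⁻¹ • outer yh yh - (‖sh‖ ^ 2)⁻¹ • outer sh sh)) := frob_add_le _ _
    _ ≤ (frob ((1 - (‖sh‖ ^ 2)⁻¹ • outer sh sh) * (A - 1) * (1 - (‖sh‖ ^ 2)⁻¹ • outer sh sh)
          + outer w av) + frob (outer av w))
        + (frob (dot sh av • (((dot y s)⁻¹ * (dot y s)⁻¹) • outer yh yh
            - ((‖sh‖ ^ 2)⁻¹ * (‖sh‖ ^ 2)⁻¹) • outer sh sh))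
          + frob ((dot y s)⁻¹ • outer yh yh - (‖sh‖ ^ 2)⁻¹ • outer sh sh)) :=
        add_le_add (frob_add_le _ _) (frob_add_le _ _)
    _ ≤ ((frob ((1 - (‖sh‖ ^ 2)⁻¹ • outer sh sh) * (A - 1) * (1 - (‖sh‖ ^ 2)⁻¹ • outer sh sh))
          + frob (outer w av)) + frob (outer av w))
        + (frob (dot sh av • (((dot y s)⁻¹ * (dot y s)⁻¹) • outer yh yh
            - ((‖sh‖ ^ 2)⁻¹ * (‖sh‖ ^ 2)⁻¹) • outer sh sh))
          + frob ((dot y s)⁻¹ • outer yh yh - (‖sh‖ ^ 2)⁻¹ • outer sh sh)) := by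
        apply add_le_add_left
        apply add_le_add_left
        exact frob_add_le _ _
    _ ≤ ((frob (A - 1) - ‖mApp (A - 1) sh‖ ^ 2 / (2 * δ * ‖sh‖ ^ 2))
          + (τ / ((1 - τ) * ‖sh‖)) * (spec A * ‖sh‖)
          + (spec A * ‖sh‖) * (τ / ((1 - τ) * ‖sh‖)))
        + ((‖sh‖ * (spec A * ‖sh‖)) * ((τ / ((1 - τ) * ‖sh‖))
            * ((1 + τ) / ((1 - τ) * ‖sh‖) + 1 / ‖sh‖))
          + (τ * ‖sh‖ * ((1 + τ) / ((1 - τ) * ‖sh‖)) + ‖sh‖ * (τ / ((1 - τ) * ‖sh‖)))) := by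
        apply add_le_add
        · exact add_le_add (add_le_add hQXQ hfT1) hfT2
        · exact add_le_add hfT3 hfT4
    _ ≤ frob (A - 1) - ‖mApp (A - 1) sh‖ ^ 2 / (2 * δ * ‖sh‖ ^ 2)
        + (spec A * (4 / (1 - τ)) + spec A * (4 * τ / (1 - τ) ^ 2) + (3 + τ) / (1 - τ)) * τ := by
        linarith [hbudget]
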